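/- Let $c:(0,R]\to(0,\infty)$ be smooth with $\frac{d}{dr}\big(\frac{r}{c(r)}\big) > 0$ for all $r\in(0,R]$ (the Herglotz condition). Consider the radial Riemannian metric $g = c(|x|)^{-2}\,ds^2$ on the annulus $\{a\le |x|\le R\}\subset\mathbb{R}^n$, $n\ge 2$. Then each Euclidean sphere $\{|x|=r\}$, $a\le r\le R$, is strictly convex with respect to $g$ when viewed from $\{|x|>r\}$. -/

import Mathlib

open RealInnerProductSpace

/-- Herglotz condition implies strict convexity of the Euclidean spheres for the
conformal metric `g = c(|x|)⁻² ds²`: any nontrivial geodesic of `g` tangent to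
the sphere `{|x| = r}` at `t = 0` satisfies `(d²/dt²)|γ(t)|² > 0` at `t = 0`,
i.e. it stays locally outside the sphere. -/
theorem stmt_9 (n : ℕ) (hn : 2 ≤ n) (a R : ℝ) (ha : 0 < a) (haR : a ≤ R)
    (c : ℝ → ℝ) (hc : ContDiff ℝ 1 c)
    (hcpos : ∀ r ∈ Set.Ioc (0:ℝ) R, 0 < c r)
    (herglotz : ∀ r ∈ Set.Ioc (0:ℝ) R, 0 < deriv (fun s => s / c s) r)
    (γ : ℝ → EuclideanSpace ℝ (Fin n)) (hγ : ContDiff ℝ 2 γ)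
    -- geodesic equation for the conformal metric `e^{2φ}δ`, `φ = -log c(|x|)`,
    -- with gradient of `φ` equal to `(-c'(|x|)/c(|x|)) • (|x|⁻¹ • x)`
    (hgeo : ∀ t : ℝ, a ≤ ‖γ t‖ → ‖γ t‖ ≤ R →
      deriv (deriv γ) t =
        (‖deriv γ t‖ ^ 2 * (-(deriv c ‖γ t‖) / c ‖γ t‖)) • (‖γ t‖⁻¹ • γ t)
        - (2 * (-(deriv c ‖γ t‖) / c ‖γ t‖) * ⟪‖γ t‖⁻¹ • γ t, deriv γ t⟫) • deriv γ t)
    (r : ℝ) (har : a ≤ r) (hrR : r ≤ R)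
    (h0 : ‖γ 0‖ = r) (htang : ⟪γ 0, deriv γ 0⟫ = 0)
    (hv : deriv γ 0 ≠ 0) :
    0 < deriv (deriv fun t => ‖γ t‖ ^ 2) 0 := by
  have hγd : Differentiable ℝ γ := hγ.differentiable (by norm_num)
  have hγ1 : ContDiff ℝ 1 (deriv γ) := by
    have h2 : ContDiff ℝ ((1:ℕ) + 1) γ := by exact_mod_cast hγ
    exact (contDiff_succ_iff_deriv.mp h2).2.2
  have hγ'd : Differentiable ℝ (deriv γ) := hγ1.differentiable (by norm_num)
  have hfd : ∀ t, HasDerivAt (fun t => ‖γ t‖ ^ 2) (2 * ⟪γ t, deriv γ t⟫) t := by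
    intro t
    have h := ((hγd t).hasDerivAt.inner ℝ (hγd t).hasDerivAt)
    have : (fun t => ‖γ t‖ ^ 2) = fun t => ⟪γ t, γ t⟫ := by
      funext s; rw [real_inner_self_eq_norm_sq]
    rw [this]
    exact h.congr_deriv (by rw [real_inner_comm]; ring)
  have hDf : deriv (fun t => ‖γ t‖ ^ 2) = fun t => 2 * ⟪γ t, deriv γ t⟫ := by
    funext t; exact (hfd t).deriv
  have h2 : HasDerivAt (fun t => 2 * ⟪γ t, deriv γ t⟫)
      (2 * (⟪γ 0, deriv (deriv γ) 0⟫ + ⟪deriv γ 0, deriv γ 0⟫)) 0 := by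
    have := ((hγd 0).hasDerivAt.inner ℝ (hγ'd 0).hasDerivAt).const_mul (2:ℝ)
    convert this using 1
  have hval : deriv (deriv fun t => ‖γ t‖ ^ 2) 0
      = 2 * (⟪γ 0, deriv (deriv γ) 0⟫ + ⟪deriv γ 0, deriv γ 0⟫) := by
    rw [hDf]; exact h2.deriv
  -- evaluate geodesic equation at 0
  have hr0 : (0:ℝ) < r := lt_of_lt_of_le ha har
  have hrIoc : r ∈ Set.Ioc (0:ℝ) R := ⟨hr0, hrR⟩
  have hcr : 0 < c r := hcpos r hrIoc
  have hgeo0 := hgeo 0 (by rw [h0]; exact har) (by rw [h0]; exact hrR)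
  rw [h0] at hgeo0
  set v := deriv γ 0 with hvdef
  set κ : ℝ := -(deriv c r) / c r with hκ
  have hinn : ⟪γ 0, deriv (deriv γ) 0⟫ = ‖v‖ ^ 2 * κ * r := by
    rw [hgeo0, inner_sub_right, real_inner_smul_right, real_inner_smul_right,
      real_inner_smul_right, real_inner_self_eq_norm_sq, h0, htang]
    field_simp
    ring
  -- Herglotz gives c r - r * deriv c r > 0
  have hcdiff : DifferentiableAt ℝ c r := (hc.differentiable (by norm_num)) r
  have hder : deriv (fun s => s / c s) r = (c r - r * deriv c r) / (c r) ^ 2 := by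
    rw [deriv_fun_div (differentiableAt_fun_id) hcdiff (ne_of_gt hcr)]
    simp
  have hpos : 0 < c r - r * deriv c r := by
    have h := herglotz r hrIoc
    rw [hder] at h
    have hc2 : (0:ℝ) < (c r) ^ 2 := by positivity
    rcases div_pos_iff.mp h with ⟨h1, _⟩ | ⟨_, h2⟩
    · exact h1
    · linarith
  have hκr : 0 < 1 + κ * r := by
    rw [hκ]
    have : 1 + -deriv c r / c r * r = (c r - r * deriv c r) / c r := by
      field_simp; ring
    rw [this]
    exact div_pos hpos hcr
  have hvpos : 0 < ‖v‖ ^ 2 := pow_pos (norm_pos_iff.mpr hv) 2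
  rw [hval, hinn, real_inner_self_eq_norm_sq]
  nlinarith
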